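/- arXiv:2411.04445 — 3 statements merged into one kernel-verified Lean document; each statement's English description precedes it below -/
import Mathlib

section
/- Let q = pⁿ and k a positive integer with gcd(k,n) = h. For any a, b ∈ F_q, the polynomial x^{p^k} − ax − b has either 0, 1, or p^h zeros in F_q. -/
open Finset Polynomial

private lemma pp_mul {F : Type*} [CommRing F] (x : F) (p a : ℕ) (h : x ^ p ^ a = x) (q : ℕ) :
    x ^ p ^ (a * q) = x := by
  induction q with
  | zero => simp
  | succ q ih => rw [Nat.mul_succ, pow_add, pow_mul, ih, h]

private lemma pp_dvd {F : Type*} [CommRing F] (x : F) (p : ℕ) {a b : ℕ} (hab : a ∣ b)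
    (h : x ^ p ^ a = x) : x ^ p ^ b = x := by
  obtain ⟨t, rfl⟩ := hab
  exact pp_mul x p a h t

private lemma pp_gcd {F : Type*} [CommRing F] (x : F) (p : ℕ) :
    ∀ a b, x ^ p ^ a = x → x ^ p ^ b = x → x ^ p ^ (Nat.gcd a b) = x := by
  intro a
  induction a using Nat.strong_induction_on with
  | _ a ih =>
    intro b ha hb
    rcases Nat.eq_zero_or_pos a with h0 | h0
    · subst h0; simpa using hb
    · rw [Nat.gcd_rec]
      refine ih (b % a) (Nat.mod_lt b h0) a ?_ ha
      have h1 : x ^ p ^ (a * (b / a)) = x := pp_mul x p a ha (b / a)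
      have h3 : x ^ p ^ (a * (b / a) + b % a) = x ^ p ^ (b % a) := by
        rw [pow_add, pow_mul, h1]
      rw [Nat.div_add_mod b a] at h3
      rw [← h3]
      exact hb

private lemma count_fixed (p n m : ℕ) (hp : p.Prime) (hn : 0 < n) (hm : 0 < m) (hmn : m ∣ n)
    (F : Type*) [Field F] [Fintype F] [DecidableEq F] (hcard : Fintype.card F = p ^ n) :
    (univ.filter fun x : F => x ^ p ^ m = x).card = p ^ m := by
  have h1m : 1 < p ^ m := Nat.one_lt_pow hm.ne' hp.one_lt
  have h1n : 1 < p ^ n := Nat.one_lt_pow hn.ne' hp.one_lt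
  set g : F[X] := X ^ p ^ m - X with hg
  set f : F[X] := X ^ p ^ n - X with hf
  -- divisibility
  have hdvd : g ∣ f := by
    have h1 : (X : F[X]) ^ (p ^ m - 1) - 1 ∣ (X : F[X]) ^ (p ^ n - 1) - 1 := by
      obtain ⟨t, ht⟩ : p ^ m - 1 ∣ p ^ n - 1 := by
        obtain ⟨s, rfl⟩ := hmn
        have := Nat.sub_dvd_pow_sub_pow (p ^ m) 1 s
        simpa [← pow_mul] using this
      rw [ht, pow_mul]
      simpa using sub_dvd_pow_sub_pow ((X : F[X]) ^ (p ^ m - 1)) 1 t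
    have e1 : g = X * ((X : F[X]) ^ (p ^ m - 1) - 1) := by
      rw [mul_sub, mul_one, ← pow_succ', (by omega : p ^ m - 1 + 1 = p ^ m)]
    have e2 : f = X * ((X : F[X]) ^ (p ^ n - 1) - 1) := by
      rw [mul_sub, mul_one, ← pow_succ', (by omega : p ^ n - 1 + 1 = p ^ n)]
    rw [e1, e2]
    exact mul_dvd_mul_left _ h1
  have hf0 : f ≠ 0 := FiniteField.X_pow_card_pow_sub_X_ne_zero F hn.ne' hp.one_lt
  have hg0 : g ≠ 0 := FiniteField.X_pow_card_pow_sub_X_ne_zero F hm.ne' hp.one_lt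
  have hgdeg : g.natDegree = p ^ m :=
    FiniteField.X_pow_card_pow_sub_X_natDegree_eq F hm.ne' hp.one_lt
  have hfroots : f.roots = Finset.univ.val := by
    rw [hf, ← hcard]; exact FiniteField.roots_X_pow_card_sub_X F
  have hfsplits : Splits f := by
    rw [splits_iff_card_roots, hfroots,
      FiniteField.X_pow_card_pow_sub_X_natDegree_eq F hn.ne' hp.one_lt, ← hcard]
    rfl
  have hgsplits : Splits g := hfsplits.of_dvd hf0 hdvd
  have hgcard : Multiset.card g.roots = p ^ m := by
    rw [← hgdeg]; exact (splits_iff_card_roots.mp hgsplits)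
  have hgnodup : g.roots.Nodup := by
    have hle := roots.le_of_dvd hf0 hdvd
    rw [hfroots] at hle
    exact Multiset.nodup_of_le hle Finset.univ.nodup
  have hset : (univ.filter fun x : F => x ^ p ^ m = x) = g.roots.toFinset := by
    ext x
    rw [Multiset.mem_toFinset, mem_roots hg0]
    simp only [mem_filter, mem_univ, true_and, Multiset.mem_toFinset, mem_roots hg0, hg,
      IsRoot, eval_sub, eval_pow, eval_X, sub_eq_zero]
  rw [hset, Multiset.toFinset_card_of_nodup hgnodup, hgcard]

/-- The trinomial `x^{p^k} - a x - b` has either `0`, `1`, or `p^h` zeros in `F_q`,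
where `q = pⁿ` and `h = gcd(k, n)`. -/
theorem trinomial_zeros (p n k : ℕ) (hp : p.Prime) (hn : 0 < n) (hk : 0 < k)
    (F : Type*) [Field F] [Fintype F] [DecidableEq F]
    (hcard : Fintype.card F = p ^ n)
    (a b : F) :
    (univ.filter (fun x : F => x ^ p ^ k - a * x - b = 0)).card ∈
      ({0, 1, p ^ Nat.gcd k n} : Set ℕ) := by
  simp only [Set.mem_insert_iff, Set.mem_singleton_iff]
  haveI hpfact : Fact p.Prime := ⟨hp⟩
  -- char F = p
  haveI hchar : CharP F p := by
    obtain ⟨q, hq⟩ := CharP.exists F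
    have hqprime : q.Prime := CharP.char_is_prime F q
    obtain ⟨m, _, hcard'⟩ := FiniteField.card F q
    have : p = q := by
      have hd : p ∣ q ^ (m : ℕ) := by
        rw [← hcard', hcard]
        exact dvd_pow_self p hn.ne'
      exact ((Nat.prime_dvd_prime_iff_eq hp hqprime).mp (hp.dvd_of_dvd_pow hd))
    rwa [this]
  set h := Nat.gcd k n with hh
  have hhpos : 0 < h := Nat.gcd_pos_of_pos_left n hk
  have hhdvdn : h ∣ n := Nat.gcd_dvd_right k n
  have hhdvdk : h ∣ k := Nat.gcd_dvd_left k n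
  set S := univ.filter (fun x : F => x ^ p ^ k - a * x - b = 0) with hS
  by_cases hSe : S = ∅
  · left; rw [hSe]; rfl
  obtain ⟨x₀, hx₀⟩ := Finset.nonempty_iff_ne_empty.mpr hSe
  have hx₀' : x₀ ^ p ^ k = a * x₀ + b := by
    have := (mem_filter.mp hx₀).2
    linear_combination this
  set K := univ.filter (fun y : F => y ^ p ^ k = a * y) with hK
  have hSK : S.card = K.card := by
    apply Finset.card_bij' (fun x _ => x - x₀) (fun y _ => y + x₀)
    · intro x hx
      have hx' := (mem_filter.mp hx).2
      simp only [hK, mem_filter, mem_univ, true_and]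
      rw [sub_pow_char_pow, hx₀']
      linear_combination hx'
    · intro y hy
      have hy' := (mem_filter.mp hy).2
      simp only [hS, mem_filter, mem_univ, true_and]
      rw [add_pow_char_pow, hx₀']
      linear_combination hy'
    · intro x _; ring
    · intro y _; ring
  rw [hSK]
  by_cases hc : ∃ c ∈ K, c ≠ 0
  · -- K has a nonzero element; card K = p ^ h
    obtain ⟨c, hcK, hc0⟩ := hc
    have hcEq : c ^ p ^ k = a * c := (mem_filter.mp hcK).2
    have ha0 : a ≠ 0 := by
      intro h0
      rw [h0, zero_mul] at hcEq
      exact hc0 ((pow_eq_zero_iff (pow_ne_zero k hp.pos.ne')).mp hcEq)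
    set Kfix := univ.filter (fun u : F => u ^ p ^ k = u) with hKfix
    have hKKfix : K.card = Kfix.card := by
      apply Finset.card_bij' (fun y _ => y * c⁻¹) (fun u _ => u * c)
      · intro y hy
        have hy' := (mem_filter.mp hy).2
        simp only [hKfix, mem_filter, mem_univ, true_and]
        rw [mul_pow, inv_pow, hy', hcEq, mul_inv_rev]
        field_simp
      · intro u hu
        have hu' := (mem_filter.mp hu).2
        simp only [hK, mem_filter, mem_univ, true_and]
        rw [mul_pow, hu', hcEq]
        ring
      · intro y _; exact inv_mul_cancel_right₀ hc0 y
      · intro u _; exact mul_inv_cancel_right₀ hc0 u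
    have hfixh : Kfix = univ.filter (fun u : F => u ^ p ^ h = u) := by
      ext u
      simp only [hKfix, mem_filter, mem_univ, true_and]
      constructor
      · intro hu
        exact pp_gcd u p k n hu (hcard ▸ FiniteField.pow_card u)
      · intro hu
        exact pp_dvd u p hhdvdk hu
    right; right
    rw [hKKfix, hfixh]
    exact count_fixed p n h hp hn hhpos hhdvdn F hcard
  · -- K = {0}
    have hK0 : K = {0} := by
      ext y
      simp only [hK, mem_filter, mem_univ, true_and, Finset.mem_singleton]
      constructor
      · intro hy
        by_contra hy0
        exact hc ⟨y, mem_filter.mpr ⟨mem_univ _, hy⟩, hy0⟩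
      · rintro rfl
        rw [zero_pow (pow_ne_zero k hp.pos.ne'), mul_zero]
    right; left
    rw [hK0]; rfl
end

section
/- Let q = pⁿ with p an odd prime, χ₁ the canonical additive character of F_q, α a primitive element of F_q, η the quadratic character, and G = G(η,χ₁) the Gaussian sum. Fix τ with 1 ≤ τ ≤ q−2 and a₁, a₂, b₁, b₂ ∈ F_q with D := b₁ − b₂α^τ − (a₁−a₂α^τ)²/(4(1−α^τ)) ≠ 0. Then ∑_{t=0}^{q−2} ∑_{x∈F_q} χ₁((1−α^τ)α^t x² + (a₁−a₂α^τ)α^t x + (b₁−b₂α^τ)α^t) = G² · η(1−α^τ) · η(D), and in particular this sum has absolute value q. -/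
open Finset

private lemma qchar_mul_self {F : Type*} [Field F] [Fintype F] [DecidableEq F]
    {a : F} (ha : a ≠ 0) :
    ((quadraticChar F).ringHomComp (Int.castRingHom ℂ)) a *
      ((quadraticChar F).ringHomComp (Int.castRingHom ℂ)) a = 1 := by
  have h := quadraticChar_sq_one ha
  simp only [MulChar.ringHomComp_apply, eq_intCast]
  rw [← Int.cast_mul, ← sq, h, Int.cast_one]

private lemma qchar_abs_one {F : Type*} [Field F] [Fintype F] [DecidableEq F]
    {a : F} (ha : a ≠ 0) :
    ‖((quadraticChar F).ringHomComp (Int.castRingHom ℂ)) a‖ = 1 := by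
  rcases quadraticChar_dichotomy ha with h | h <;>
    simp [MulChar.ringHomComp_apply, h]

private lemma sum_quad_char {F : Type*} [Field F] [Fintype F] [DecidableEq F]
    (hF2 : ringChar F ≠ 2) (ψ : AddChar F ℂ) (hψ : ψ ≠ 1) {a : F} (ha : a ≠ 0) :
    ∑ x : F, ψ (a * x ^ 2) =
      ((quadraticChar F).ringHomComp (Int.castRingHom ℂ)) a *
        gaussSum ((quadraticChar F).ringHomComp (Int.castRingHom ℂ)) ψ := by
  set χ := (quadraticChar F).ringHomComp (Int.castRingHom ℂ) with hχdef
  have step1 : ∑ x : F, ψ (a * x ^ 2) = ∑ z : F, (χ z + 1) * ψ (a * z) := by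
    rw [← Finset.sum_fiberwise' univ (fun x : F => x ^ 2) (fun z => ψ (a * z))]
    refine Finset.sum_congr rfl fun z _ => ?_
    rw [Finset.sum_const, nsmul_eq_mul]
    congr 1
    have hc := quadraticChar_card_sqrts hF2 z
    have hset : ({x : F | x ^ 2 = z}.toFinset) = univ.filter (fun x : F => x ^ 2 = z) := by
      ext x; simp
    rw [hset] at hc
    rw [hχdef]
    simp only [MulChar.ringHomComp_apply, eq_intCast]
    exact_mod_cast hc
  have step3 : ∑ z : F, ψ (a * z) = 0 := by
    simp_rw [mul_comm a]
    rw [AddChar.sum_mulShift a (AddChar.IsPrimitive.of_ne_one hψ), if_neg ha]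
    norm_num
  have step4 : ∑ z : F, χ z * ψ (a * z) = χ a * gaussSum χ ψ := by
    have hg := gaussSum_mulShift χ ψ (Units.mk0 a ha)
    have hrw : gaussSum χ (AddChar.mulShift ψ (Units.mk0 a ha : F)) =
        ∑ z : F, χ z * ψ (a * z) := by
      simp [gaussSum, AddChar.mulShift_apply]
    rw [hrw, Units.val_mk0] at hg
    calc ∑ z : F, χ z * ψ (a * z)
        = (χ a * χ a) * ∑ z : F, χ z * ψ (a * z) := by rw [qchar_mul_self ha, one_mul]
      _ = χ a * (χ a * ∑ z : F, χ z * ψ (a * z)) := by ring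
      _ = χ a * gaussSum χ ψ := by rw [hg]
  calc ∑ x : F, ψ (a * x ^ 2) = ∑ z : F, (χ z + 1) * ψ (a * z) := step1
    _ = ∑ z : F, χ z * ψ (a * z) + ∑ z : F, ψ (a * z) := by
        rw [← Finset.sum_add_distrib]; exact Finset.sum_congr rfl fun z _ => by ring
    _ = χ a * gaussSum χ ψ := by rw [step3, step4, add_zero]

/-- Nondegenerate case of the correlation computation: if
`D := b₁ - b₂α^τ - (a₁ - a₂α^τ)²/(4(1 - α^τ)) ≠ 0`, the double character sum
equals `G² η(1 - α^τ) η(D)` and has absolute value `q`. -/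
theorem correlation_sum_nondegenerate (p n : ℕ) (hp : p.Prime) (hodd : p ≠ 2) (hn : 0 < n)
    (F : Type*) [Field F] [Fintype F] [DecidableEq F] [CharP F p] [Algebra (ZMod p) F]
    (hcard : Fintype.card F = p ^ n)
    (χ₁ : AddChar F ℂ)
    (hχ : ∀ x : F, χ₁ x =
      Complex.exp (2 * Real.pi * Complex.I * ((Algebra.trace (ZMod p) F x).val : ℂ) / p))
    (α : F) (hα : ∀ x : F, x ≠ 0 → ∃ m : ℕ, α ^ m = x)
    (τ : ℕ) (hτ1 : 1 ≤ τ) (hτ2 : τ ≤ Fintype.card F - 2)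
    (a₁ a₂ b₁ b₂ : F)
    (D : F) (hDdef : D = b₁ - b₂ * α ^ τ - (a₁ - a₂ * α ^ τ) ^ 2 / (4 * (1 - α ^ τ)))
    (hD : D ≠ 0) :
    (∑ t ∈ range (Fintype.card F - 1), ∑ x : F,
        χ₁ ((1 - α ^ τ) * α ^ t * x ^ 2 + (a₁ - a₂ * α ^ τ) * α ^ t * x
            + (b₁ - b₂ * α ^ τ) * α ^ t) =
      (gaussSum ((quadraticChar F).ringHomComp (Int.castRingHom ℂ)) χ₁) ^ 2 *
        ((quadraticChar F).ringHomComp (Int.castRingHom ℂ)) (1 - α ^ τ) *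
        ((quadraticChar F).ringHomComp (Int.castRingHom ℂ)) D) ∧
    ‖(∑ t ∈ range (Fintype.card F - 1), ∑ x : F,
        χ₁ ((1 - α ^ τ) * α ^ t * x ^ 2 + (a₁ - a₂ * α ^ τ) * α ^ t * x
            + (b₁ - b₂ * α ^ τ) * α ^ t))‖ = (Fintype.card F : ℝ) := by
  have hring : ringChar F = p := ringChar.eq F p
  subst hring
  haveI : Fact (ringChar F).Prime := ⟨hp⟩
  set q := Fintype.card F with hq
  set χ := (quadraticChar F).ringHomComp (Int.castRingHom ℂ) with hχdef
  set g := gaussSum χ χ₁ with hgdef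
  have hp3 : 3 ≤ ringChar F := by
    have := hp.two_le; omega
  have hq3 : 3 ≤ q := by
    calc 3 ≤ ringChar F := hp3
    _ ≤ ringChar F ^ n := Nat.le_self_pow hn.ne' _
    _ = q := hcard.symm
  -- χ₁ is nontrivial
  have hψ1 : χ₁ ≠ 1 := by
    obtain ⟨b, hb⟩ := FiniteField.trace_to_zmod_nondegenerate F (one_ne_zero (α := F))
    rw [one_mul] at hb
    intro h
    have h1 : χ₁ b = 1 := by rw [h]; rfl
    rw [hχ b, Complex.exp_eq_one_iff] at h1
    obtain ⟨k, hk⟩ := h1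
    have h2πI : (2 * (Real.pi : ℂ) * Complex.I) ≠ 0 := by
      simp [Real.pi_ne_zero, Complex.I_ne_zero]
    have hpC : ((ringChar F : ℂ)) ≠ 0 := by
      exact_mod_cast (Nat.cast_ne_zero (R := ℂ)).mpr hp.ne_zero
    set v : ℕ := (Algebra.trace (ZMod (ringChar F)) F b).val with hv
    have h2 : (2 * (Real.pi : ℂ) * Complex.I) * (v : ℂ) =
        (2 * (Real.pi : ℂ) * Complex.I) * ((k : ℂ) * (ringChar F : ℂ)) := by
      field_simp at hk
      linear_combination (2 * (Real.pi : ℂ) * Complex.I) * hk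
    have hveq : (v : ℂ) = (k : ℂ) * (ringChar F : ℂ) := mul_left_cancel₀ h2πI h2
    have hvZ : (v : ℤ) = k * (ringChar F : ℤ) := by exact_mod_cast hveq
    have hdvd : (ringChar F : ℤ) ∣ (v : ℤ) := ⟨k, by linarith [hvZ]⟩
    have hdvdN : ringChar F ∣ v := by exact_mod_cast hdvd
    have hvlt : v < ringChar F := ZMod.val_lt _
    have hvne : v ≠ 0 := by
      intro h0
      exact hb ((ZMod.val_eq_zero _).mp h0)
    have := Nat.le_of_dvd (Nat.pos_of_ne_zero hvne) hdvdN
    omega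
  have hF2 : ringChar F ≠ 2 := by omega
  -- α is a primitive element
  obtain ⟨x₀, hx₀⟩ : ∃ x : F, x ∉ ({0, 1} : Finset F) := by
    by_contra hcon
    push_neg at hcon
    have hsub : (univ : Finset F) ⊆ {0, 1} := fun x _ => hcon x
    have h1 := Finset.card_le_card hsub
    have h2 : ({0, 1} : Finset F).card ≤ 2 := by
      refine le_trans (Finset.card_insert_le _ _) ?_
      simp
    rw [Finset.card_univ] at h1
    omega
  simp only [Finset.mem_insert, Finset.mem_singleton, not_or] at hx₀
  obtain ⟨hx0, hx1⟩ := hx₀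
  have hα0 : α ≠ 0 := by
    rintro rfl
    obtain ⟨m, hm⟩ := hα x₀ hx0
    rcases Nat.eq_zero_or_pos m with h | h
    · rw [h, pow_zero] at hm; exact hx1 hm.symm
    · rw [zero_pow h.ne'] at hm; exact hx0 hm.symm
  have hαpow : α ^ (q - 1) = 1 := FiniteField.pow_card_sub_one_eq_one α hα0
  have hfin : IsOfFinOrder α :=
    isOfFinOrder_iff_pow_eq_one.mpr ⟨q - 1, by omega, hαpow⟩
  have hordpos : 0 < orderOf α := hfin.orderOf_pos
  have hord : orderOf α = q - 1 := by
    have hdvd : orderOf α ∣ q - 1 := orderOf_dvd_of_pow_eq_one hαpow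
    have hle : q - 1 ≤ orderOf α := by
      have hsub : (univ.filter (fun x : F => x ≠ 0)) ⊆
          (range (orderOf α)).image (α ^ ·) := by
        intro x hx
        rw [Finset.mem_filter] at hx
        obtain ⟨m, hm⟩ := hα x hx.2
        rw [Finset.mem_image]
        exact ⟨m % orderOf α, Finset.mem_range.mpr (Nat.mod_lt _ hordpos),
          by rw [pow_mod_orderOf, hm]⟩
      calc q - 1 = (univ.filter (fun x : F => x ≠ 0)).card := by
            rw [Finset.filter_ne', Finset.card_erase_of_mem (Finset.mem_univ _),
              Finset.card_univ]
        _ ≤ ((range (orderOf α)).image (α ^ ·)).card := Finset.card_le_card hsub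
        _ ≤ (range (orderOf α)).card := Finset.card_image_le
        _ = orderOf α := Finset.card_range _
    exact le_antisymm (Nat.le_of_dvd (by omega) hdvd) hle
  have hA : (1 : F) - α ^ τ ≠ 0 := by
    intro h
    have hτeq : α ^ τ = 1 := by linear_combination -h
    have := Nat.le_of_dvd (by omega) (orderOf_dvd_of_pow_eq_one hτeq)
    omega
  -- reindexing the outer sum
  have hbij : ∀ f : F → ℂ, ∑ t ∈ range (q - 1), f (α ^ t) =
      ∑ u ∈ univ.filter (fun u : F => u ≠ 0), f u := by
    intro f
    refine Finset.sum_bij (fun t _ => α ^ t) ?_ ?_ ?_ ?_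
    · intro t ht
      simp [pow_ne_zero _ hα0]
    · intro s hs t ht hst
      have := pow_injOn_Iio_orderOf (x := α)
        (by rw [hord]; exact Set.mem_Iio.mpr (Finset.mem_range.mp hs))
        (by rw [hord]; exact Set.mem_Iio.mpr (Finset.mem_range.mp ht)) hst
      exact this
    · intro u hu
      rw [Finset.mem_filter] at hu
      obtain ⟨m, hm⟩ := hα u hu.2
      refine ⟨m % (q - 1), Finset.mem_range.mpr (Nat.mod_lt _ (by omega)), ?_⟩
      show α ^ (m % (q - 1)) = u
      rw [← hord, pow_mod_orderOf, hm]
    · intro t ht; rfl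
  -- inner sum via completing the square
  have h2F : (2 : F) ≠ 0 := Ring.two_ne_zero hF2
  have h4F : (4 : F) ≠ 0 := by
    have : (4 : F) = 2 * 2 := by norm_num
    rw [this]; exact mul_ne_zero h2F h2F
  have hinner : ∀ u : F, u ≠ 0 →
      ∑ x : F, χ₁ ((1 - α ^ τ) * u * x ^ 2 + (a₁ - a₂ * α ^ τ) * u * x
          + (b₁ - b₂ * α ^ τ) * u) = χ ((1 - α ^ τ) * u) * g * χ₁ (D * u) := by
    intro u hu
    set A := (1 : F) - α ^ τ
    set B := a₁ - a₂ * α ^ τ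
    set c := B / (2 * A) with hc
    have hkey : ∀ x : F, A * u * x ^ 2 + B * u * x + (b₁ - b₂ * α ^ τ) * u
        = A * u * (x + c) ^ 2 + D * u := by
      intro x
      rw [hDdef, hc]
      field_simp
      ring
    calc ∑ x : F, χ₁ (A * u * x ^ 2 + B * u * x + (b₁ - b₂ * α ^ τ) * u)
        = ∑ x : F, χ₁ (A * u * (x + c) ^ 2) * χ₁ (D * u) := by
          refine Finset.sum_congr rfl fun x _ => ?_
          rw [hkey x, AddChar.map_add_eq_mul]
      _ = (∑ x : F, χ₁ (A * u * x ^ 2)) * χ₁ (D * u) := by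
          rw [← Finset.sum_mul]
          congr 1
          exact Fintype.sum_equiv (Equiv.addRight c)
            (fun x => χ₁ (A * u * (x + c) ^ 2)) (fun y => χ₁ (A * u * y ^ 2))
            (fun x => by simp)
      _ = χ (A * u) * g * χ₁ (D * u) := by
          rw [sum_quad_char hF2 χ₁ hψ1 (mul_ne_zero hA hu), hχdef, hgdef]
  -- the Gauss-sum evaluation of the remaining sum
  have hDsum : ∑ u : F, χ u * χ₁ (D * u) = χ D * g := by
    have hg := gaussSum_mulShift χ χ₁ (Units.mk0 D hD)
    have hrw : gaussSum χ (AddChar.mulShift χ₁ (Units.mk0 D hD : F)) =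
        ∑ u : F, χ u * χ₁ (D * u) := by
      simp [gaussSum, AddChar.mulShift_apply]
    rw [hrw, Units.val_mk0] at hg
    calc ∑ u : F, χ u * χ₁ (D * u)
        = (χ D * χ D) * ∑ u : F, χ u * χ₁ (D * u) := by
          rw [hχdef] at *; rw [qchar_mul_self hD, one_mul]
      _ = χ D * (χ D * ∑ u : F, χ u * χ₁ (D * u)) := by ring
      _ = χ D * g := by rw [hg]
  -- the main equality
  have hmain : ∑ t ∈ range (q - 1), ∑ x : F,
      χ₁ ((1 - α ^ τ) * α ^ t * x ^ 2 + (a₁ - a₂ * α ^ τ) * α ^ t * x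
          + (b₁ - b₂ * α ^ τ) * α ^ t) = g ^ 2 * χ (1 - α ^ τ) * χ D := by
    calc ∑ t ∈ range (q - 1), ∑ x : F,
        χ₁ ((1 - α ^ τ) * α ^ t * x ^ 2 + (a₁ - a₂ * α ^ τ) * α ^ t * x
            + (b₁ - b₂ * α ^ τ) * α ^ t)
        = ∑ u ∈ univ.filter (fun u : F => u ≠ 0), ∑ x : F,
            χ₁ ((1 - α ^ τ) * u * x ^ 2 + (a₁ - a₂ * α ^ τ) * u * x
                + (b₁ - b₂ * α ^ τ) * u) :=
          hbij (fun u => ∑ x : F, χ₁ ((1 - α ^ τ) * u * x ^ 2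
            + (a₁ - a₂ * α ^ τ) * u * x + (b₁ - b₂ * α ^ τ) * u))
      _ = ∑ u ∈ univ.filter (fun u : F => u ≠ 0),
            (χ (1 - α ^ τ) * g) * (χ u * χ₁ (D * u)) := by
          refine Finset.sum_congr rfl fun u hu => ?_
          rw [Finset.mem_filter] at hu
          rw [hinner u hu.2, map_mul]
          ring
      _ = (χ (1 - α ^ τ) * g) * ∑ u ∈ univ.filter (fun u : F => u ≠ 0),
            χ u * χ₁ (D * u) := by rw [← Finset.mul_sum]
      _ = (χ (1 - α ^ τ) * g) * ∑ u : F, χ u * χ₁ (D * u) := by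
          congr 1
          refine Finset.sum_filter_of_ne fun u _ hne => ?_
          intro h0
          apply hne
          rw [h0]
          simp [hχdef, MulChar.ringHomComp_apply]
      _ = (χ (1 - α ^ τ) * g) * (χ D * g) := by rw [hDsum]
      _ = g ^ 2 * χ (1 - α ^ τ) * χ D := by ring
  refine ⟨hmain, ?_⟩
  rw [hmain]
  have hχne1 : χ ≠ 1 := by
    obtain ⟨a, ha⟩ := quadraticChar_exists_neg_one' hF2
    intro h
    have h1 : χ (a : F) = 1 := by rw [h]; exact MulChar.one_apply_coe a
    rw [hχdef, MulChar.ringHomComp_apply, ha] at h1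
    norm_num at h1
  have hquad : χ.IsQuadratic := (quadraticChar_isQuadratic F).comp _
  have hprim : χ₁.IsPrimitive := AddChar.IsPrimitive.of_ne_one hψ1
  have gsq : g ^ 2 = χ (-1) * (q : ℂ) := gaussSum_sq hχne1 hquad hprim
  rw [norm_mul, norm_mul, gsq, norm_mul]
  rw [hχdef, qchar_abs_one (neg_ne_zero.mpr (one_ne_zero (α := F))),
    qchar_abs_one hA, qchar_abs_one hD]
  simp
end

section
/- Let K ≥ 2, fix q ≥ 2 and consider the family of QCSS parameters (M,K,N,θ) = (q², q, q−1, q). The Welch-type lower bound θ_opt = K·N·√((M/K − 1)/(M·N − 1)) satisfies θ/θ_opt → 1 as q → ∞; i.e., lim_{q→∞} q / (q·√((q−1)³/(q²(q−1)−1))) = 1. -/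
open Filter

private lemma qcss_inner_tendsto :
    Tendsto (fun q : ℕ =>
        (((q : ℝ) - 1) ^ 3 / ((q : ℝ) ^ 2 * ((q : ℝ) - 1) - 1)))
      atTop (nhds 1) := by
  have h0 : Tendsto (fun q : ℕ => (1 : ℝ) / q) atTop (nhds 0) :=
    tendsto_one_div_atTop_nhds_zero_nat
  have hcube : Tendsto (fun q : ℕ => ((1 : ℝ) / q) ^ 3) atTop (nhds 0) := by
    simpa using h0.pow 3
  have hnum : Tendsto (fun q : ℕ => ((1 : ℝ) - 1 / q) ^ 3) atTop (nhds 1) := by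
    have := ((tendsto_const_nhds (x := (1:ℝ))).sub h0).pow 3
    simpa using this
  have hden : Tendsto (fun q : ℕ => (1 : ℝ) - 1 / q - (1 / q) ^ 3) atTop (nhds 1) := by
    have := ((tendsto_const_nhds (x := (1:ℝ))).sub h0).sub hcube
    simpa using this
  have hlim : Tendsto (fun q : ℕ =>
      ((1 : ℝ) - 1 / q) ^ 3 / ((1 : ℝ) - 1 / q - (1 / q) ^ 3)) atTop (nhds 1) := by
    have := hnum.div hden (by norm_num)
    simpa [Pi.div_def] using this
  refine hlim.congr' ?_
  filter_upwards [eventually_ge_atTop 1] with q hq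
  have hq0 : (q : ℝ) ≠ 0 := Nat.cast_ne_zero.mpr (by omega)
  have h3 : (q : ℝ) ^ 3 ≠ 0 := pow_ne_zero 3 hq0
  rw [show ((q : ℝ) - 1) ^ 3 = (1 - 1 / q) ^ 3 * q ^ 3 by field_simp,
    show ((q : ℝ) ^ 2 * ((q : ℝ) - 1) - 1) = (1 - 1 / q - (1 / q) ^ 3) * q ^ 3 by
      field_simp,
    mul_div_mul_right _ _ h3]

/-- For QCSS parameters `(M, K, N, θ) = (q², q, q−1, q)`, the ratio `θ/θ_opt`
tends to `1` as `q → ∞`: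
`lim_{q→∞} q / (q · √((q−1)³ / (q²(q−1) − 1))) = 1`. -/
theorem qcss_ratio_tendsto_one :
    Tendsto (fun q : ℕ =>
        (q : ℝ) / ((q : ℝ) *
          Real.sqrt (((q : ℝ) - 1) ^ 3 / ((q : ℝ) ^ 2 * ((q : ℝ) - 1) - 1))))
      atTop (nhds 1) := by
  have hsqrt : Tendsto (fun q : ℕ =>
      Real.sqrt (((q : ℝ) - 1) ^ 3 / ((q : ℝ) ^ 2 * ((q : ℝ) - 1) - 1)))
      atTop (nhds 1) := by
    have := (Real.continuous_sqrt.tendsto 1).comp qcss_inner_tendsto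
    simpa [Function.comp_def] using this
  have hlim : Tendsto (fun q : ℕ =>
      1 / Real.sqrt (((q : ℝ) - 1) ^ 3 / ((q : ℝ) ^ 2 * ((q : ℝ) - 1) - 1)))
      atTop (nhds 1) := by
    have := (tendsto_const_nhds (x := (1:ℝ))).div hsqrt one_ne_zero
    simpa only [show (1:ℝ)/1 = 1 by norm_num, Pi.div_def] using this
  refine hlim.congr' ?_
  filter_upwards [eventually_ge_atTop 1] with q hq
  have hq0 : (q : ℝ) ≠ 0 := Nat.cast_ne_zero.mpr (by omega)
  rw [div_mul_eq_div_div, div_self hq0]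
end
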